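/- Let V be a Banach space over a p-adic field L, and M ⊆ V a lattice (an O_L-submodule with ∪_{a∈L^×} aM = V and ∩_{a∈L^×} aM = {0}) that is open and bounded. Then for a totally disconnected locally compact group 𝒢, the space Meas(𝒢, V) of V-valued measures (distributions continuous for the supremum norm) equals the image of the canonical inclusion Dist(𝒢, M) ⊗_{O_L} L → Dist(𝒢, V). -/

import Mathlib

open scoped Pointwise

/-- The additive group of compactly supported continuous `ℤ`-valued functions
(`ℤ` discrete) on a topological space, i.e. `C_c(𝒢, ℤ)₀`. -/
def CcZ (𝒢 : Type*) [TopologicalSpace 𝒢] : AddSubgroup C(𝒢, ℤ) where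
  carrier := {f | HasCompactSupport (f : 𝒢 → ℤ)}
  add_mem' := by
    intro f g hf hg
    simpa [Set.mem_setOf_eq] using hf.add hg
  zero_mem' := by
    simp only [Set.mem_setOf_eq, ContinuousMap.coe_zero]
    rw [HasCompactSupport, tsupport, Function.support_zero, closure_empty]
    exact isCompact_empty
  neg_mem' := by
    intro f hf
    simp only [Set.mem_setOf_eq, ContinuousMap.coe_neg]
    rw [HasCompactSupport, tsupport, Function.support_neg]
    exact hf

namespace Stmt3Aux

def trunc (j : ℕ) (m : ℤ) : ℤ :=
  if (j : ℤ) ≤ m then 1 else if m ≤ -(j : ℤ) then -1 else 0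

lemma trunc_zero {j : ℕ} (hj : 1 ≤ j) : trunc j 0 = 0 := by
  unfold trunc; split_ifs <;> omega

lemma abs_trunc_le (j : ℕ) (m : ℤ) : |trunc j m| ≤ 1 := by
  unfold trunc; split_ifs <;> simp

lemma sum_trunc (N : ℕ) : ∀ m : ℤ, |m| ≤ N → (∑ k ∈ Finset.range N, trunc (k + 1) m) = m := by
  induction N with
  | zero => intro m hm; simp only [Finset.range_zero, Finset.sum_empty]
            rcases abs_le.mp hm with ⟨h1, h2⟩; omega
  | succ N ih =>
    intro m hm
    by_cases h : |m| ≤ N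
    · rw [Finset.sum_range_succ, ih m h]
      have hb := abs_le.mp h
      have : trunc (N + 1) m = 0 := by
        unfold trunc; split_ifs with h1 h2 <;> push_cast at * <;> omega
      rw [this, add_zero]
    · have hb := abs_le.mp hm
      have hb' : ¬(-(N : ℤ) ≤ m ∧ m ≤ N) := fun hh => h (abs_le.mpr hh)
      push_cast at hb
      have hcase : m = (N : ℤ) + 1 ∨ m = -((N : ℤ) + 1) := by omega
      rcases hcase with rfl | rfl
      · have hone : ∀ k ∈ Finset.range (N + 1), trunc (k + 1) ((N : ℤ) + 1) = 1 := by
          intro k hk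
          rw [Finset.mem_range] at hk
          unfold trunc
          rw [if_pos (by push_cast; omega)]
        rw [Finset.sum_congr rfl hone, Finset.sum_const, Finset.card_range, nsmul_eq_mul]
        push_cast; ring
      · have hone : ∀ k ∈ Finset.range (N + 1), trunc (k + 1) (-((N : ℤ) + 1)) = -1 := by
          intro k hk
          rw [Finset.mem_range] at hk
          unfold trunc
          rw [if_neg (by push_cast; omega), if_pos (by push_cast; omega)]
        rw [Finset.sum_congr rfl hone, Finset.sum_const, Finset.card_range, nsmul_eq_mul]
        push_cast; ring

lemma norm_trunc_le (j : ℕ) (m : ℤ) : ‖(trunc j m : ℤ)‖ ≤ 1 := by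
  rw [Int.norm_eq_abs]
  exact_mod_cast abs_trunc_le j m

variable {𝒢 : Type*} [TopologicalSpace 𝒢]

lemma norm_range_bdd (f : C(𝒢, ℤ)) (hf : HasCompactSupport (f : 𝒢 → ℤ)) :
    BddAbove (Set.range fun x => ‖(f x : ℤ)‖) := by
  have hfin : (f '' tsupport (f : 𝒢 → ℤ)).Finite :=
    (hf.image f.continuous).finite ⟨inferInstance⟩
  have hsub : (Set.range fun x => ‖(f x : ℤ)‖) ⊆
      (fun n : ℤ => ‖n‖) '' (insert 0 (f '' tsupport (f : 𝒢 → ℤ))) := by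
    rintro r ⟨x, rfl⟩
    by_cases hx : x ∈ tsupport (f : 𝒢 → ℤ)
    · exact ⟨f x, Set.mem_insert_of_mem _ ⟨x, hx, rfl⟩, rfl⟩
    · exact ⟨0, Set.mem_insert _ _, by
        simp [image_eq_zero_of_notMem_tsupport (f := (f : 𝒢 → ℤ)) hx]⟩
  exact (((hfin.insert 0).image _).bddAbove).mono hsub

lemma exists_nat_bound (f : C(𝒢, ℤ)) (hf : HasCompactSupport (f : 𝒢 → ℤ)) :
    ∃ N : ℕ, ∀ x : 𝒢, |f x| ≤ N := by
  obtain ⟨r, hr⟩ := norm_range_bdd f hf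
  refine ⟨⌈r⌉₊, fun x => ?_⟩
  have h1 : ‖(f x : ℤ)‖ ≤ r := hr ⟨x, rfl⟩
  rw [Int.norm_eq_abs] at h1
  have h2 : (|f x| : ℝ) ≤ (⌈r⌉₊ : ℝ) := by
    calc (|f x| : ℝ) = |(f x : ℝ)| := by push_cast [Int.cast_abs]; ring
    _ ≤ r := h1
    _ ≤ ⌈r⌉₊ := Nat.le_ceil r
  exact_mod_cast h2

/-- The truncation of `f` at level `k+1`, as an element of `CcZ 𝒢`. -/
def gk (f : C(𝒢, ℤ)) (hf : HasCompactSupport (f : 𝒢 → ℤ)) (k : ℕ) : CcZ 𝒢 :=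
  ⟨⟨fun x => trunc (k + 1) (f x),
    (continuous_of_discreteTopology (f := trunc (k + 1))).comp f.continuous⟩,
    hf.comp_left (g := trunc (k + 1)) (trunc_zero (by omega))⟩

end Stmt3Aux

/-- Let `V` be a Banach space over a `p`-adic field `L` and `M ⊆ V` an
open and bounded lattice (an `𝒪_L`-submodule, i.e. stable under addition and under
scalars of norm `≤ 1`, with `⋃ₐ aM = V` and `⋂ₐ aM = 0`).  Then, for a totally
disconnected locally compact group `𝒢`, a `V`-valued distribution on `𝒢` (a
homomorphism `μ : C_c(𝒢, ℤ)₀ → V`) is a measure (continuous for the supremum norm,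
equivalently bounded) if and only if it lies in the image of the canonical inclusion
`Dist(𝒢, M) ⊗_{𝒪_L} L → Dist(𝒢, V)`, i.e. all its values lie in `a • M` for a single
`a ∈ L^×`. -/
theorem stmt3
    (p : ℕ) [Fact p.Prime]
    (L : Type*) [NontriviallyNormedField L] [Algebra ℚ_[p] L]
    (𝒢 : Type*) [Group 𝒢] [TopologicalSpace 𝒢] [IsTopologicalGroup 𝒢]
    [LocallyCompactSpace 𝒢] [TotallyDisconnectedSpace 𝒢]
    (V : Type*) [NormedAddCommGroup V] [NormedSpace L V] [CompleteSpace V]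
    (M : Set V)
    (hM0 : (0 : V) ∈ M)
    (hMadd : ∀ v ∈ M, ∀ w ∈ M, v + w ∈ M)
    (hMsmul : ∀ c : L, ‖c‖ ≤ 1 → ∀ v ∈ M, c • v ∈ M)
    (hMcover : ∀ v : V, ∃ a : Lˣ, v ∈ (a : L) • M)
    (hMsep : ∀ v : V, (∀ a : Lˣ, v ∈ (a : L) • M) → v = 0)
    (hMopen : M ∈ nhds (0 : V))
    (hMbdd : Bornology.IsBounded M)
    (μ : CcZ 𝒢 →+ V) :
    (∃ C : ℝ, ∀ f : CcZ 𝒢, ‖μ f‖ ≤ C * ⨆ x : 𝒢, ‖((f : C(𝒢, ℤ)) x : ℤ)‖)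
      ↔ ∃ a : Lˣ, ∀ f : CcZ 𝒢, μ f ∈ (a : L) • M := by
  classical
  constructor
  · rintro ⟨C, hC⟩
    set C' : ℝ := max C 0 with hC'def
    have hC'nn : 0 ≤ C' := le_max_right _ _
    obtain ⟨ε, hε, hball⟩ := Metric.mem_nhds_iff.mp hMopen
    obtain ⟨c, hc⟩ := NormedField.exists_lt_norm L ((C' + 1) / ε)
    have hcpos : 0 < ‖c‖ := lt_of_le_of_lt (by positivity) hc
    have hc0 : c ≠ 0 := norm_pos_iff.mp hcpos
    -- key smallness: ‖c⁻¹‖ * C' < ε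
    have hsmall : ‖c‖⁻¹ * C' < ε := by
      have h1 : C' + 1 < ‖c‖ * ε := by
        rw [div_lt_iff₀ hε] at hc; linarith
      rw [inv_mul_lt_iff₀ hcpos]
      nlinarith
    refine ⟨Units.mk0 c hc0, fun f => ?_⟩
    obtain ⟨N, hN⟩ := Stmt3Aux.exists_nat_bound (f : C(𝒢, ℤ)) f.2
    -- f is the sum of its truncations
    have hfeq : f = ∑ k ∈ Finset.range N, Stmt3Aux.gk (f : C(𝒢, ℤ)) f.2 k := by
      apply Subtype.ext
      have hcoe : ((∑ k ∈ Finset.range N, Stmt3Aux.gk (f : C(𝒢, ℤ)) f.2 k : CcZ 𝒢) : C(𝒢, ℤ))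
          = ∑ k ∈ Finset.range N, ((Stmt3Aux.gk (f : C(𝒢, ℤ)) f.2 k : CcZ 𝒢) : C(𝒢, ℤ)) :=
        map_sum (CcZ 𝒢).subtype _ _
      rw [hcoe]
      ext x
      rw [ContinuousMap.coe_sum, Finset.sum_apply]
      exact (Stmt3Aux.sum_trunc N ((f : C(𝒢, ℤ)) x) (hN x)).symm
    -- each truncation has μ-value of norm ≤ C'
    have hkey : ∀ k : ℕ, ‖μ (Stmt3Aux.gk (f : C(𝒢, ℤ)) f.2 k)‖ ≤ C' := by
      intro k
      have hs_le : (⨆ x : 𝒢, ‖(((Stmt3Aux.gk (f : C(𝒢, ℤ)) f.2 k : CcZ 𝒢) : C(𝒢, ℤ)) x : ℤ)‖) ≤ 1 :=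
        Real.iSup_le (fun x => Stmt3Aux.norm_trunc_le _ _) zero_le_one
      have hs_nn : 0 ≤ ⨆ x : 𝒢, ‖(((Stmt3Aux.gk (f : C(𝒢, ℤ)) f.2 k : CcZ 𝒢) : C(𝒢, ℤ)) x : ℤ)‖ :=
        Real.iSup_nonneg fun x => norm_nonneg _
      calc ‖μ (Stmt3Aux.gk (f : C(𝒢, ℤ)) f.2 k)‖
          ≤ C * ⨆ x : 𝒢, ‖(((Stmt3Aux.gk (f : C(𝒢, ℤ)) f.2 k : CcZ 𝒢) : C(𝒢, ℤ)) x : ℤ)‖ := hC _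
        _ ≤ C' * ⨆ x : 𝒢, ‖(((Stmt3Aux.gk (f : C(𝒢, ℤ)) f.2 k : CcZ 𝒢) : C(𝒢, ℤ)) x : ℤ)‖ :=
            mul_le_mul_of_nonneg_right (le_max_left _ _) hs_nn
        _ ≤ C' * 1 := mul_le_mul_of_nonneg_left hs_le hC'nn
        _ = C' := mul_one _
    have hmem : ∀ k : ℕ, c⁻¹ • μ (Stmt3Aux.gk (f : C(𝒢, ℤ)) f.2 k) ∈ M := by
      intro k
      apply hball
      rw [Metric.mem_ball, dist_zero_right]
      calc ‖c⁻¹ • μ (Stmt3Aux.gk (f : C(𝒢, ℤ)) f.2 k)‖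
          ≤ ‖c⁻¹‖ * ‖μ (Stmt3Aux.gk (f : C(𝒢, ℤ)) f.2 k)‖ := norm_smul_le _ _
        _ ≤ ‖c⁻¹‖ * C' := mul_le_mul_of_nonneg_left (hkey k) (norm_nonneg _)
        _ = ‖c‖⁻¹ * C' := by rw [norm_inv]
        _ < ε := hsmall
    have hsum : c⁻¹ • μ f ∈ M := by
      rw [hfeq, map_sum, Finset.smul_sum]
      exact Finset.sum_induction _ (· ∈ M) (fun a b ha hb => hMadd a ha b hb) hM0
        (fun k _ => hmem k)
    have := Set.smul_mem_smul_set (a := c) hsum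
    rwa [smul_inv_smul₀ hc0] at this
  · rintro ⟨a, ha⟩
    obtain ⟨R, hR⟩ := hMbdd.exists_norm_le
    refine ⟨max (‖(a : L)‖ * R) 0, fun f => ?_⟩
    by_cases hf : ∀ x : 𝒢, (f : C(𝒢, ℤ)) x = 0
    · have hf0 : f = 0 := Subtype.ext (ContinuousMap.ext fun x => hf x)
      rw [hf0, map_zero, norm_zero]
      exact mul_nonneg (le_max_right _ _) (Real.iSup_nonneg fun x => norm_nonneg _)
    · push_neg at hf
      obtain ⟨x0, hx0⟩ := hf
      have hbdd := Stmt3Aux.norm_range_bdd (f : C(𝒢, ℤ)) f.2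
      have h1 : (1 : ℝ) ≤ ⨆ x : 𝒢, ‖((f : C(𝒢, ℤ)) x : ℤ)‖ := by
        refine le_trans ?_ (le_ciSup hbdd x0)
        rw [Int.norm_eq_abs]
        exact_mod_cast Int.one_le_abs hx0
      obtain ⟨m, hm, hmeq⟩ := ha f
      have h2 : ‖μ f‖ ≤ ‖(a : L)‖ * R := by
        rw [← hmeq]
        calc ‖(a : L) • m‖ ≤ ‖(a : L)‖ * ‖m‖ := norm_smul_le _ _
          _ ≤ ‖(a : L)‖ * R := mul_le_mul_of_nonneg_left (hR m hm) (norm_nonneg _)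
      calc ‖μ f‖ ≤ ‖(a : L)‖ * R := h2
        _ ≤ max (‖(a : L)‖ * R) 0 := le_max_left _ _
        _ ≤ max (‖(a : L)‖ * R) 0 * ⨆ x : 𝒢, ‖((f : C(𝒢, ℤ)) x : ℤ)‖ :=
            le_mul_of_one_le_right (le_max_right _ _) h1
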